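/- Let G be a finite graph, τ a threshold function, and U the vertex set of a non-bipartite component of G[{u : τ(u)=1}] on which τ ≡ 1, such that every vertex of N_G(U) has threshold equal to its degree. Let v₀v₁…v_{2k}v₀ be an odd cycle in G[U] and suppose v₀ ∈ X_ℓ in the activation process. Then v_j, v_{2k+1−j} ∈ X_{ℓ+j} for every j ∈ {1,…,k}; in particular the adjacent vertices v_k and v_{k+1} are both in X_{ℓ+k}, and hence both lie in X_t for all t ≥ ℓ+k. -/

import Mathlib

open Finset

/-- The non-monotone activation process on `(G, τ)` starting with `X`:
`X_t = {u : |N_G(u) ∩ X_{t-1}| ≥ τ(u)}` for `t ≥ 1`. -/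
def activation {V : Type*} (G : SimpleGraph V) [Fintype V] [DecidableEq V]
    [DecidableRel G.Adj] (τ : V → ℤ) (X : Finset V) : ℕ → Finset V
  | 0 => X
  | t + 1 => Finset.univ.filter
      (fun u => τ u ≤ ((G.neighborFinset u ∩ activation G τ X t).card : ℤ))

/-- `X` is a non-monotone target set for `(G, τ)`. -/
def IsTargetSet {V : Type*} (G : SimpleGraph V) [Fintype V] [DecidableEq V]
    [DecidableRel G.Adj] (τ : V → ℤ) (X : Finset V) : Prop :=
  ∃ t₀ : ℕ, ∀ t ≥ t₀, activation G τ X t = Finset.univ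

/-- Open neighbourhood of a set of vertices: `N_G(S)`. -/
def openNbhd {V : Type*} (G : SimpleGraph V) (S : Set V) : Set V :=
  {v | v ∉ S ∧ ∃ u ∈ S, G.Adj u v}

/-- Closed neighbourhood of a set of vertices: `N_G[S]`. -/
def closedNbhd {V : Type*} (G : SimpleGraph V) (S : Set V) : Set V :=
  S ∪ openNbhd G S

/-- Closed neighbourhood, as a finset. -/
def closedNbhdFinset {V : Type*} (G : SimpleGraph V) [Fintype V] [DecidableEq V]
    [DecidableRel G.Adj] (U : Finset V) : Finset V :=
  U ∪ Finset.univ.filter (fun v => ∃ u ∈ U, G.Adj u v)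

/-- `U` is the vertex set of a connected component of the subgraph of `G` induced by `S`. -/
def IsComponentOf {V : Type*} (G : SimpleGraph V) (S U : Set V) : Prop :=
  U ⊆ S ∧ U.Nonempty ∧ (G.induce U).Connected ∧
    ∀ u ∈ U, ∀ v ∈ S, G.Adj u v → v ∈ U

/-- The subgraph of `G` induced by `S`, as a graph on the subtype `S`. -/
def restrict {V : Type*} (G : SimpleGraph V) (S : Set V) : SimpleGraph S where
  Adj a b := G.Adj a b
  symm := ⟨fun _ _ h => G.adj_symm h⟩
  loopless := ⟨fun a h => G.loopless.irrefl a h⟩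

instance {V : Type*} (G : SimpleGraph V) (S : Set V) [h : DecidableRel G.Adj] :
    DecidableRel (restrict G S).Adj := fun a b => h a b

lemma act_succ {V : Type*} [Fintype V] [DecidableEq V] (G : SimpleGraph V)
    [DecidableRel G.Adj] (τ : V → ℤ) (X₀ : Finset V) {t : ℕ} {u w : V}
    (hτ : τ w = 1) (hadj : G.Adj u w) (hu : u ∈ activation G τ X₀ t) :
    w ∈ activation G τ X₀ (t + 1) := by
  simp only [activation, Finset.mem_filter, Finset.mem_univ, true_and, hτ]
  have hmem : u ∈ G.neighborFinset w ∩ activation G τ X₀ t := by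
    simp [SimpleGraph.mem_neighborFinset, hadj.symm, hu]
  have hpos : 0 < (G.neighborFinset w ∩ activation G τ X₀ t).card :=
    Finset.card_pos.2 ⟨u, hmem⟩
  exact_mod_cast hpos

theorem stmt_14 {V : Type*} [Fintype V] [DecidableEq V] (G : SimpleGraph V)
    [DecidableRel G.Adj] (τ : V → ℤ) (X₀ : Finset V) (U : Set V)
    (hcomp : IsComponentOf G {u | τ u = 1} U)
    (hnonbip : ¬ (restrict G U).Colorable 2)
    (hN : ∀ w ∈ openNbhd G U, τ w = (G.degree w : ℤ))
    (k ℓ : ℕ) (v : ℕ → V)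
    (hvU : ∀ i ≤ 2 * k, v i ∈ U)
    (hcyc : ∀ i < 2 * k, G.Adj (v i) (v (i + 1)))
    (hcyc' : G.Adj (v (2 * k)) (v 0))
    (hv0 : v 0 ∈ activation G τ X₀ ℓ) :
    (∀ j : ℕ, 1 ≤ j → j ≤ k →
      v j ∈ activation G τ X₀ (ℓ + j) ∧ v (2 * k + 1 - j) ∈ activation G τ X₀ (ℓ + j)) ∧
    (∀ t ≥ ℓ + k, v k ∈ activation G τ X₀ t ∧ v (k + 1) ∈ activation G τ X₀ t) := by
  have hτU : ∀ u ∈ U, τ u = 1 := fun u hu => hcomp.1 hu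
  have hk : 1 ≤ k := by
    rcases Nat.eq_zero_or_pos k with h | h
    · subst h; exact absurd hcyc' (G.loopless.irrefl _)
    · exact h
  have main : ∀ j : ℕ, 1 ≤ j → j ≤ k →
      v j ∈ activation G τ X₀ (ℓ + j) ∧ v (2 * k + 1 - j) ∈ activation G τ X₀ (ℓ + j) := by
    intro j
    induction j with
    | zero => omega
    | succ j ih =>
      intro _ hj
      rcases Nat.eq_zero_or_pos j with hj0 | hj1
      · subst hj0
        refine ⟨act_succ G τ X₀ (hτU _ (hvU 1 (by omega))) (hcyc 0 (by omega)) hv0, ?_⟩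
        have e : 2 * k + 1 - 1 = 2 * k := by omega
        rw [e]
        exact act_succ G τ X₀ (hτU _ (hvU (2 * k) le_rfl)) hcyc'.symm hv0
      · obtain ⟨h1, h2⟩ := ih hj1 (by omega)
        constructor
        · exact act_succ G τ X₀ (hτU _ (hvU (j + 1) (by omega))) (hcyc j (by omega)) h1
        · have hadj : G.Adj (v (2 * k - j)) (v (2 * k + 1 - j)) := by
            have h := hcyc (2 * k - j) (by omega)
            have e : 2 * k - j + 1 = 2 * k + 1 - j := by omega
            rwa [e] at h
          have e2 : 2 * k + 1 - (j + 1) = 2 * k - j := by omega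
          rw [e2]
          exact act_succ G τ X₀ (hτU _ (hvU (2 * k - j) (by omega))) hadj.symm h2
  refine ⟨main, ?_⟩
  have hvk : v k ∈ activation G τ X₀ (ℓ + k) ∧ v (k + 1) ∈ activation G τ X₀ (ℓ + k) := by
    obtain ⟨h1, h2⟩ := main k hk le_rfl
    have e : 2 * k + 1 - k = k + 1 := by omega
    rw [e] at h2
    exact ⟨h1, h2⟩
  have hadjk : G.Adj (v k) (v (k + 1)) := hcyc k (by omega)
  intro t ht
  induction t, ht using Nat.le_induction with
  | base => exact hvk
  | succ n hn ih =>
    exact ⟨act_succ G τ X₀ (hτU _ (hvU k (by omega))) hadjk.symm ih.2,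
      act_succ G τ X₀ (hτU _ (hvU (k + 1) (by omega))) hadjk ih.1⟩
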